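/- Variational representation of implied volatility: for all k ∈ ℝ and (1-e^k)^+ ≤ c < 1, Y_BS(k,c) = inf over d₂ ∈ ℝ of [Φ^{-1}(c + e^k·Φ(d₂)) - d₂], with the convention Φ^{-1}(u) = +∞ for u ≥ 1. Moreover if c > (1-e^k)^+, the infimum is attained at d₂* = -k/y - y/2 where y = Y_BS(k,c). -/

import Mathlib

open MeasureTheory Real Filter Asymptotics Set

/-- Standard normal density. -/
noncomputable def phi (z : ℝ) : ℝ := (Real.sqrt (2 * Real.pi))⁻¹ * Real.exp (-z ^ 2 / 2)

/-- Standard normal CDF. -/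
noncomputable def Phi (x : ℝ) : ℝ := ∫ z in Set.Iic x, phi z

/-- Black–Scholes normalized call price. -/
noncomputable def CBS (k y : ℝ) : ℝ :=
  if 0 < y then Phi (-k / y + y / 2) - Real.exp k * Phi (-k / y - y / 2)
  else max (1 - Real.exp k) 0

/-- Implied total standard deviation: inverse of `CBS k` on `[0,∞)`. -/
noncomputable def YBS (k c : ℝ) : ℝ := sInf {y : ℝ | 0 ≤ y ∧ CBS k y = c}

/-- Inverse of the standard normal CDF on (0,1). -/
noncomputable def PhiInv (u : ℝ) : ℝ := sInf {x : ℝ | u ≤ Phi x}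

/-- Extended-real quantile with the convention `Φ⁻¹(u) = +∞` for `u ≥ 1`, `-∞` for `u ≤ 0`. -/
noncomputable def PhiInvE (u : ℝ) : EReal :=
  if 1 ≤ u then ⊤ else if u ≤ 0 then ⊥ else ((PhiInv u : ℝ) : EReal)

lemma phi_pos (z : ℝ) : 0 < phi z :=
  mul_pos (inv_pos.2 (Real.sqrt_pos.2 (by positivity))) (Real.exp_pos _)

lemma continuous_phi : Continuous phi := by
  unfold phi; fun_prop

lemma phi_even (z : ℝ) : phi (-z) = phi z := by simp [phi, neg_pow]

lemma phi_eq (z : ℝ) : phi z = (Real.sqrt (2 * Real.pi))⁻¹ * Real.exp (-(1/2) * z ^ 2) := by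
  rw [phi]; ring_nf

lemma integrable_phi : Integrable phi := by
  have h := (integrable_exp_neg_mul_sq (b := (1:ℝ)/2) (by norm_num)).const_mul
    (Real.sqrt (2 * Real.pi))⁻¹
  exact h.congr (Filter.Eventually.of_forall fun z => (phi_eq z).symm)

lemma integral_phi : ∫ z, phi z = 1 := by
  have h : ∫ z, phi z = (Real.sqrt (2 * Real.pi))⁻¹ * ∫ z, Real.exp (-(1/2) * z ^ 2) := by
    simp_rw [phi_eq]; exact MeasureTheory.integral_const_mul _ _
  rw [h, integral_gaussian]
  rw [show Real.pi / (1/2) = 2 * Real.pi by ring]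
  exact inv_mul_cancel₀ (Real.sqrt_ne_zero'.2 (by positivity))
lemma Phi_sub_Phi (a b : ℝ) : Phi b - Phi a = ∫ t in a..b, phi t := by
  rw [Phi, Phi]
  exact intervalIntegral.integral_Iic_sub_Iic integrable_phi.integrableOn integrable_phi.integrableOn

lemma hasDerivAt_Phi (x : ℝ) : HasDerivAt Phi (phi x) x := by
  have h : ∀ t, Phi t = Phi 0 + ∫ s in (0:ℝ)..t, phi s := by
    intro t
    rw [← Phi_sub_Phi 0 t]; ring
  have hd : HasDerivAt (fun t => Phi 0 + ∫ s in (0:ℝ)..t, phi s) (phi x) x := by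
    exact (intervalIntegral.integral_hasDerivAt_right
      (continuous_phi.intervalIntegrable _ _)
      (continuous_phi.stronglyMeasurableAtFilter _ _)
      continuous_phi.continuousAt).const_add _
  exact hd.congr_deriv rfl |>.congr_of_eventuallyEq (Filter.Eventually.of_forall fun t => (h t))

lemma continuous_Phi : Continuous Phi :=
  continuous_iff_continuousAt.2 fun x => (hasDerivAt_Phi x).continuousAt

lemma strictMono_Phi : StrictMono Phi := by
  intro a b hab
  have h : 0 < ∫ t in a..b, phi t :=
    intervalIntegral.intervalIntegral_pos_of_pos (continuous_phi.intervalIntegrable _ _)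
      phi_pos hab
  rw [← Phi_sub_Phi a b] at h; linarith

lemma Phi_pos (x : ℝ) : 0 < Phi x := by
  rw [Phi]
  apply (setIntegral_pos_iff_support_of_nonneg_ae ?_ ?_).2
  · have : (Function.support phi) = Set.univ := by
      ext z; simp [Function.mem_support, (phi_pos z).ne']
    rw [this]
    simpa [this] using (by simp : (volume (Set.Iic x)) ≠ 0)
  · exact Filter.Eventually.of_forall fun z => (phi_pos z).le
  · exact integrable_phi.integrableOn
lemma Phi_add_tail (x : ℝ) : Phi x + ∫ z in Set.Ioi x, phi z = 1 := by
  rw [Phi, intervalIntegral.integral_Iic_add_Ioi integrable_phi.integrableOn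
    integrable_phi.integrableOn, integral_phi]

lemma Phi_lt_one (x : ℝ) : Phi x < 1 := by
  have h : 0 < ∫ z in Set.Ioi x, phi z := by
    apply (setIntegral_pos_iff_support_of_nonneg_ae ?_ ?_).2
    · have : (Function.support phi) = Set.univ := by
        ext z; simp [Function.mem_support, (phi_pos z).ne']
      simpa [this] using (by simp : (volume (Set.Ioi x)) ≠ 0)
    · exact Filter.Eventually.of_forall fun z => (phi_pos z).le
    · exact integrable_phi.integrableOn
  have := Phi_add_tail x
  linarith

lemma Phi_neg (x : ℝ) : Phi (-x) = 1 - Phi x := by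
  have h1 : ∫ z in Set.Iic (-x), phi (-z) = ∫ z in Set.Ioi x, phi z := by
    simpa using integral_comp_neg_Iic (-x) phi
  have h2 : Phi (-x) = ∫ z in Set.Ioi x, phi z := by
    rw [Phi, ← h1]
    exact setIntegral_congr_fun measurableSet_Iic fun z _ => (phi_even z).symm
  rw [h2]
  have := Phi_add_tail x; linarith

lemma tendsto_Phi_atTop : Tendsto Phi atTop (nhds 1) := by
  have h := (aecover_Iic (tendsto_id : Tendsto (id : ℝ → ℝ) atTop atTop)
    (μ := volume)).integral_tendsto_of_countably_generated integrable_phi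
  rwa [integral_phi] at h

lemma tendsto_Phi_atBot : Tendsto Phi atBot (nhds 0) := by
  have h : Tendsto (fun x => 1 - Phi (-x)) atBot (nhds (1 - 1)) :=
    tendsto_const_nhds.sub (tendsto_Phi_atTop.comp tendsto_neg_atBot_atTop)
  simp only [sub_self] at h
  exact h.congr fun x => by rw [Phi_neg, sub_sub_cancel]
lemma PhiInv_eq {u x : ℝ} (h : Phi x = u) : PhiInv u = x := by
  have hset : {t : ℝ | u ≤ Phi t} = Set.Ici x := by
    ext t
    simp only [Set.mem_setOf_eq, Set.mem_Ici, ← h]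
    exact ⟨fun h' => strictMono_Phi.le_iff_le.1 h', fun h' => strictMono_Phi.le_iff_le.2 h'⟩
  rw [PhiInv, hset, csInf_Ici]

lemma exists_Phi_eq {u : ℝ} (h0 : 0 < u) (h1 : u < 1) : ∃ x, Phi x = u := by
  obtain ⟨a, ha⟩ := (tendsto_Phi_atBot.eventually_lt_const h0).exists
  obtain ⟨b, hb⟩ := (tendsto_Phi_atTop.eventually_const_lt h1).exists
  have hab : a ≤ b := (strictMono_Phi.lt_iff_lt.1 (ha.trans hb)).le
  obtain ⟨x, _, hx⟩ := intermediate_value_Icc hab continuous_Phi.continuousOn ⟨ha.le, hb.le⟩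
  exact ⟨x, hx⟩

lemma Phi_PhiInv {u : ℝ} (h0 : 0 < u) (h1 : u < 1) : Phi (PhiInv u) = u := by
  obtain ⟨x, hx⟩ := exists_Phi_eq h0 h1
  rw [PhiInv_eq hx, hx]

lemma Phi_neg_eq_tail (x : ℝ) : Phi (-x) = ∫ z in Set.Ioi x, phi z := by
  have := Phi_add_tail x
  rw [Phi_neg]; linarith

lemma tendsto_phi_atTop : Tendsto phi atTop (nhds 0) := by
  have h1 : Tendsto (fun z : ℝ => -z ^ 2 / 2) atTop atBot := by
    apply Filter.Tendsto.atBot_div_const (by norm_num)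
    exact tendsto_neg_atBot_iff.2 (tendsto_pow_atTop two_ne_zero)
  have h2 : Tendsto (fun z : ℝ => Real.exp (-z ^ 2 / 2)) atTop (nhds 0) :=
    Real.tendsto_exp_atBot.comp h1
  have := h2.const_mul (Real.sqrt (2 * Real.pi))⁻¹
  rw [mul_zero] at this
  exact this.congr fun z => by rw [phi]

lemma hasDerivAt_neg_phi (t : ℝ) : HasDerivAt (fun s => -phi s) (t * phi t) t := by
  have h1 : HasDerivAt (fun s : ℝ => -s ^ 2 / 2) (-t) t := by
    have := ((hasDerivAt_pow 2 t).neg).div_const 2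
    simpa using this.congr_deriv (by ring)
  have h2 : HasDerivAt (fun s : ℝ => (Real.sqrt (2 * Real.pi))⁻¹ * Real.exp (-s ^ 2 / 2))
      ((Real.sqrt (2 * Real.pi))⁻¹ * (Real.exp (-t ^ 2 / 2) * -t)) t :=
    (h1.exp).const_mul _
  have h3 : HasDerivAt phi (-(t * phi t)) t := by
    refine (h2.congr_deriv (by rw [phi]; ring)).congr_of_eventuallyEq ?_
    exact Filter.Eventually.of_forall fun s => by rw [phi]
  exact h3.neg.congr_deriv (neg_neg _)

lemma integrableOn_mul_phi (x : ℝ) : IntegrableOn (fun t => t * phi t) (Set.Ioi x) := by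
  have h := (integrable_mul_exp_neg_mul_sq (b := (1:ℝ)/2) (by norm_num)).const_mul
    (Real.sqrt (2 * Real.pi))⁻¹
  refine (h.congr ?_).integrableOn
  exact Filter.Eventually.of_forall fun t => by simp only [phi_eq t]; ring

lemma integral_mul_phi (x : ℝ) : ∫ t in Set.Ioi x, t * phi t = phi x := by
  have h := MeasureTheory.integral_Ioi_of_hasDerivAt_of_tendsto'
    (f := fun s => -phi s) (f' := fun t => t * phi t) (a := x)
    (fun t _ => hasDerivAt_neg_phi t) (integrableOn_mul_phi x)
    (by simpa using tendsto_phi_atTop.neg)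
  simpa using h

/-- Mills upper bound. -/
lemma Phi_neg_le (x : ℝ) (hx : 0 < x) : Phi (-x) ≤ phi x / x := by
  rw [Phi_neg_eq_tail]
  have h1 : ∫ z in Set.Ioi x, phi z ≤ ∫ t in Set.Ioi x, (t / x) * phi t := by
    apply setIntegral_mono_on integrable_phi.integrableOn
    · refine IntegrableOn.congr_fun ((integrableOn_mul_phi x).div_const x)
        (fun t _ => by ring) measurableSet_Ioi
    · exact measurableSet_Ioi
    · intro t ht
      have htx : x ≤ t := (Set.mem_Ioi.1 ht).le
      have : 1 ≤ t / x := (one_le_div hx).2 htx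
      nlinarith [phi_pos t]
  have h2 : ∫ t in Set.Ioi x, (t / x) * phi t = (1 / x) * ∫ t in Set.Ioi x, t * phi t := by
    rw [← MeasureTheory.integral_const_mul]
    exact setIntegral_congr_fun measurableSet_Ioi fun t _ => by ring
  rw [h2, integral_mul_phi] at h1
  calc ∫ z in Set.Ioi x, phi z ≤ 1 / x * phi x := h1
    _ = phi x / x := by ring

/-- Crude lower bound for the Gaussian tail. -/
lemma le_Phi_neg (x δ : ℝ) (hx : 0 ≤ x) (hδ : 0 < δ) : δ * phi (x + δ) ≤ Phi (-x) := by
  rw [Phi_neg_eq_tail]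
  have h1 : ∫ t in Set.Ioc x (x + δ), (fun _ => phi (x + δ)) t ≤ ∫ t in Set.Ioc x (x + δ), phi t := by
    apply setIntegral_mono_on (integrableOn_const measure_Ioc_lt_top.ne)
      (integrable_phi.integrableOn) measurableSet_Ioc
    intro t ht
    obtain ⟨ht1, ht2⟩ := ht
    have h0t : 0 < t := lt_of_le_of_lt hx ht1
    have : t ^ 2 ≤ (x + δ) ^ 2 := by nlinarith
    unfold phi
    gcongr
  have h2 : ∫ t in Set.Ioc x (x + δ), (fun _ => phi (x + δ)) t = δ * phi (x + δ) := by
    rw [setIntegral_const, measureReal_def, Real.volume_Ioc, smul_eq_mul]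
    rw [show x + δ - x = δ by ring, ENNReal.toReal_ofReal hδ.le]
  have h3 : ∫ t in Set.Ioc x (x + δ), phi t ≤ ∫ z in Set.Ioi x, phi z := by
    apply setIntegral_mono_set integrable_phi.integrableOn
      (Filter.Eventually.of_forall fun z => (phi_pos z).le)
    exact HasSubset.Subset.eventuallyLE Set.Ioc_subset_Ioi_self
  linarith
lemma tail_ratio {ε A : ℝ} (hε : 0 < ε) (hA : 0 < A) :
    ∀ᶠ x in atTop, Phi (-(x + ε)) ≤ A * Phi (-x) := by
  have hm : Tendsto (fun x : ℝ => (ε / 2) * x) atTop atTop :=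
    Tendsto.const_mul_atTop (by positivity) tendsto_id
  have hlin : Tendsto (fun x : ℝ => -(ε / 2) * x - 3 * ε ^ 2 / 8) atTop atBot := by
    have h := tendsto_atBot_add_const_right atTop (-(3 * ε ^ 2 / 8)) (tendsto_neg_atBot_iff.2 hm)
    exact h.congr fun x => by ring
  have hg : Tendsto (fun x : ℝ => Real.exp (-(ε / 2) * x - 3 * ε ^ 2 / 8) * (x + ε)⁻¹)
      atTop (nhds 0) := by
    have h1 := Real.tendsto_exp_atBot.comp hlin
    have h2 : Tendsto (fun x : ℝ => (x + ε)⁻¹) atTop (nhds 0) :=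
      tendsto_inv_atTop_zero.comp (tendsto_atTop_add_const_right _ ε tendsto_id)
    simpa using h1.mul h2
  filter_upwards [hg.eventually_lt_const (show (0:ℝ) < A * (ε / 2) by positivity),
    eventually_gt_atTop 0] with x hgx hx0
  have hxε : (0:ℝ) < x + ε := by linarith
  have l1 := Phi_neg_le (x + ε) hxε
  have l2 := le_Phi_neg x (ε / 2) hx0.le (by positivity)
  have hid : phi (x + ε) = phi (x + ε / 2) * Real.exp (-(ε / 2) * x - 3 * ε ^ 2 / 8) := by
    unfold phi
    rw [mul_assoc, ← Real.exp_add]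
    congr 1
    ring
  have hE : Real.exp (-(ε / 2) * x - 3 * ε ^ 2 / 8) ≤ A * (ε / 2) * (x + ε) := by
    have := hgx.le
    rw [← div_eq_mul_inv, div_le_iff₀ hxε] at this
    linarith
  have key : phi (x + ε) / (x + ε) ≤ A * (ε / 2 * phi (x + ε / 2)) := by
    rw [hid, div_le_iff₀ hxε]
    nlinarith [phi_pos (x + ε / 2), mul_le_mul_of_nonneg_left hE (phi_pos (x + ε / 2)).le]
  have l2' : A * (ε / 2 * phi (x + ε / 2)) ≤ A * Phi (-x) :=
    mul_le_mul_of_nonneg_left l2 hA.le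
  linarith
lemma hasDerivAt_hfun (k y d : ℝ) :
    HasDerivAt (fun t => Phi (t + y) - Real.exp k * Phi t)
      (phi (d + y) - Real.exp k * phi d) d := by
  have h1 : HasDerivAt (fun t : ℝ => Phi (t + y)) (phi (d + y)) d := by
    simpa [Function.comp_def] using (hasDerivAt_Phi (d + y)).comp d ((hasDerivAt_id d).add_const y)
  exact h1.sub ((hasDerivAt_Phi d).const_mul _)

lemma phi_shift (d y : ℝ) : phi (d + y) = phi d * Real.exp (-d * y - y ^ 2 / 2) := by
  unfold phi
  rw [mul_assoc, ← Real.exp_add]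
  congr 2
  ring

lemma continuous_hfun (k y : ℝ) : Continuous (fun t => Phi (t + y) - Real.exp k * Phi t) := by
  apply Continuous.sub
  · exact continuous_Phi.comp (continuous_id.add continuous_const)
  · exact continuous_const.mul continuous_Phi

lemma hsign (k y t : ℝ) : phi (t + y) - Real.exp k * phi t =
    phi t * (Real.exp (-t * y - y ^ 2 / 2) - Real.exp k) := by
  rw [phi_shift]; ring

lemma strictMonoOn_hfun {k y s : ℝ} (hy : 0 < y) (hsy : s * y = -k - y ^ 2 / 2) :
    StrictMonoOn (fun t => Phi (t + y) - Real.exp k * Phi t) (Set.Iic s) := by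
  apply strictMonoOn_of_deriv_pos (convex_Iic s) (continuous_hfun k y).continuousOn
  intro t ht
  rw [interior_Iic, Set.mem_Iio] at ht
  rw [(hasDerivAt_hfun k y t).deriv, hsign]
  apply mul_pos (phi_pos t)
  rw [sub_pos]
  apply Real.exp_lt_exp.2
  have : t * y < s * y := mul_lt_mul_of_pos_right ht hy
  linarith

lemma strictAntiOn_hfun {k y s : ℝ} (hy : 0 < y) (hsy : s * y = -k - y ^ 2 / 2) :
    StrictAntiOn (fun t => Phi (t + y) - Real.exp k * Phi t) (Set.Ici s) := by
  apply strictAntiOn_of_deriv_neg (convex_Ici s) (continuous_hfun k y).continuousOn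
  intro t ht
  rw [interior_Ici, Set.mem_Ioi] at ht
  rw [(hasDerivAt_hfun k y t).deriv, hsign]
  apply mul_neg_of_pos_of_neg (phi_pos t)
  rw [sub_neg]
  apply Real.exp_lt_exp.2
  have : s * y < t * y := mul_lt_mul_of_pos_right ht hy
  linarith

lemma sy_eq (k y : ℝ) (hy : 0 < y) : (-k / y - y / 2) * y = -k - y ^ 2 / 2 := by
  field_simp

/-- Unimodality: `Φ(d+y) - e^k Φ(d)` is maximized at `d = -k/y - y/2`. -/
lemma h_le_max (k y d : ℝ) (hy : 0 < y) :
    Phi (d + y) - Real.exp k * Phi d ≤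
      Phi ((-k / y - y / 2) + y) - Real.exp k * Phi (-k / y - y / 2) := by
  have hsy := sy_eq k y hy
  rcases lt_trichotomy d (-k / y - y / 2) with hd | rfl | hd
  · exact (strictMonoOn_hfun hy hsy (Set.mem_Iic.2 hd.le) (Set.mem_Iic.2 le_rfl) hd).le
  · exact le_rfl
  · exact (strictAntiOn_hfun hy hsy (Set.mem_Ici.2 le_rfl) (Set.mem_Ici.2 hd.le) hd).le
lemma CBS_of_pos {k y : ℝ} (hy : 0 < y) :
    CBS k y = Phi ((-k / y - y / 2) + y) - Real.exp k * Phi (-k / y - y / 2) := by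
  rw [CBS, if_pos hy]
  congr 2
  ring

lemma tendsto_hfun_atBot (k y : ℝ) :
    Tendsto (fun t => Phi (t + y) - Real.exp k * Phi t) atBot (nhds 0) := by
  have h1 : Tendsto (fun t : ℝ => Phi (t + y)) atBot (nhds 0) :=
    tendsto_Phi_atBot.comp (tendsto_atBot_add_const_right _ y tendsto_id)
  have h2 := tendsto_Phi_atBot.const_mul (Real.exp k)
  simpa using h1.sub h2

lemma tendsto_hfun_atTop (k y : ℝ) :
    Tendsto (fun t => Phi (t + y) - Real.exp k * Phi t) atTop (nhds (1 - Real.exp k)) := by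
  have h1 : Tendsto (fun t : ℝ => Phi (t + y)) atTop (nhds 1) :=
    tendsto_Phi_atTop.comp (tendsto_atTop_add_const_right _ y tendsto_id)
  have h2 := tendsto_Phi_atTop.const_mul (Real.exp k)
  simpa using h1.sub h2

lemma max_lt_CBS {k y : ℝ} (hy : 0 < y) : max (1 - Real.exp k) 0 < CBS k y := by
  obtain ⟨s, hs⟩ : ∃ s : ℝ, s = -k / y - y / 2 := ⟨_, rfl⟩
  have hsy : s * y = -k - y ^ 2 / 2 := by rw [hs]; exact sy_eq k y hy
  have hCBS : CBS k y = Phi (s + y) - Real.exp k * Phi s := by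
    rw [CBS_of_pos hy, hs]
  have hmono := strictMonoOn_hfun (k := k) hy hsy
  have hanti := strictAntiOn_hfun (k := k) hy hsy
  have hle1 : Phi ((s - 1) + y) - Real.exp k * Phi (s - 1) <
      Phi (s + y) - Real.exp k * Phi s := by
    have := hmono (Set.mem_Iic.2 (by linarith : s - 1 ≤ s)) (Set.mem_Iic.2 (le_refl s))
      (by linarith : s - 1 < s)
    simpa using this
  have hge1 : 0 ≤ Phi ((s - 1) + y) - Real.exp k * Phi (s - 1) := by
    apply le_of_tendsto (tendsto_hfun_atBot k y)
    filter_upwards [eventually_le_atBot (s - 1)] with t ht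
    have := hmono.monotoneOn (Set.mem_Iic.2 (by linarith : t ≤ s))
      (Set.mem_Iic.2 (by linarith : s - 1 ≤ s)) ht
    simpa using this
  have hle2 : Phi ((s + 1) + y) - Real.exp k * Phi (s + 1) <
      Phi (s + y) - Real.exp k * Phi s := by
    have := hanti (Set.mem_Ici.2 (le_refl s)) (Set.mem_Ici.2 (by linarith : s ≤ s + 1))
      (by linarith : s < s + 1)
    simpa using this
  have hge2 : 1 - Real.exp k ≤ Phi ((s + 1) + y) - Real.exp k * Phi (s + 1) := by
    apply le_of_tendsto (tendsto_hfun_atTop k y)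
    filter_upwards [eventually_ge_atTop (s + 1)] with t ht
    have := hanti.antitoneOn (Set.mem_Ici.2 (by linarith : s ≤ s + 1))
      (Set.mem_Ici.2 (by linarith : s ≤ t)) ht
    simpa using this
  rw [hCBS]
  exact max_lt (by linarith) (by linarith)

lemma key_le {k y : ℝ} (hy : 0 < y) (d : ℝ) :
    Phi (d + y) - Real.exp k * Phi d ≤ CBS k y := by
  rw [CBS_of_pos hy]
  exact h_le_max k y d hy

lemma CBS_lt_one (k y : ℝ) : CBS k y < 1 := by
  by_cases hy : 0 < y
  · rw [CBS, if_pos hy]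
    have h1 := Phi_lt_one (-k / y + y / 2)
    have h2 := mul_pos (Real.exp_pos k) (Phi_pos (-k / y - y / 2))
    linarith
  · rw [CBS, if_neg hy]
    have := Real.exp_pos k
    exact max_lt (by linarith) one_pos

lemma CBS_strictMonoOn (k : ℝ) : StrictMonoOn (CBS k) (Set.Ici 0) := by
  intro a ha b hb hab
  rcases eq_or_lt_of_le (Set.mem_Ici.1 ha) with h0 | h0
  · have hbb : 0 < b := h0 ▸ hab
    have : CBS k a = max (1 - Real.exp k) 0 := by
      rw [CBS, if_neg (by rw [← h0]; exact lt_irrefl 0)]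
    rw [this]
    exact max_lt_CBS hbb
  · have hb0 : 0 < b := lt_trans h0 hab
    have h1 : Phi ((-k / a - a / 2) + a) - Real.exp k * Phi (-k / a - a / 2) <
        Phi ((-k / a - a / 2) + b) - Real.exp k * Phi (-k / a - a / 2) := by
      have := strictMono_Phi (add_lt_add_left hab (-k / a - a / 2))
      rw [add_comm a, add_comm b] at this
      linarith
    have h2 := key_le (k := k) hb0 (-k / a - a / 2)
    rw [CBS_of_pos h0]
    linarith

lemma continuousOn_CBS (k : ℝ) : ContinuousOn (CBS k) (Set.Ioi 0) := by
  have hc1 : ContinuousOn (fun y : ℝ => -k / y + y / 2) (Set.Ioi 0) := by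
    apply ContinuousOn.add
    · exact ContinuousOn.div continuousOn_const continuousOn_id fun y hy => ne_of_gt hy
    · exact continuousOn_id.div_const 2
  have hc2 : ContinuousOn (fun y : ℝ => -k / y - y / 2) (Set.Ioi 0) := by
    apply ContinuousOn.sub
    · exact ContinuousOn.div continuousOn_const continuousOn_id fun y hy => ne_of_gt hy
    · exact continuousOn_id.div_const 2
  have hg : ContinuousOn
      (fun y : ℝ => Phi (-k / y + y / 2) - Real.exp k * Phi (-k / y - y / 2)) (Set.Ioi 0) := by
    apply ContinuousOn.sub
    · exact continuous_Phi.comp_continuousOn hc1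
    · exact (continuous_Phi.comp_continuousOn hc2).const_smul (Real.exp k)
  exact hg.congr fun y hy => by rw [CBS, if_pos (Set.mem_Ioi.1 hy)]

lemma tendsto_CBS_atTop (k : ℝ) : Tendsto (CBS k) atTop (nhds 1) := by
  have hinv : Tendsto (fun y : ℝ => -k / y) atTop (nhds 0) := by
    have := tendsto_inv_atTop_zero.const_mul (-k)
    rw [mul_zero] at this
    exact this.congr fun y => (div_eq_mul_inv _ _).symm
  have hd1 : Tendsto (fun y : ℝ => -k / y + y / 2) atTop atTop :=
    hinv.add_atTop (tendsto_id.atTop_div_const (by norm_num))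
  have hd2 : Tendsto (fun y : ℝ => -k / y - y / 2) atTop atBot := by
    have h2 : Tendsto (fun y : ℝ => y / 2) atTop atTop :=
      tendsto_id.atTop_div_const (by norm_num)
    have h := hinv.add_atBot (tendsto_neg_atBot_iff.2 h2)
    exact h.congr fun y => by ring
  have h := (tendsto_Phi_atTop.comp hd1).sub ((tendsto_Phi_atBot.comp hd2).const_mul (Real.exp k))
  rw [mul_zero, sub_zero] at h
  apply h.congr' ((eventually_gt_atTop 0).mono fun y hy => ?_)
  rw [CBS, if_pos hy]
  rfl
lemma CBS_zero (k : ℝ) : CBS k 0 = max (1 - Real.exp k) 0 := by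
  rw [CBS, if_neg (lt_irrefl 0)]

lemma tendsto_CBS_zero (k : ℝ) :
    Tendsto (CBS k) (nhdsWithin 0 (Set.Ioi 0)) (nhds (max (1 - Real.exp k) 0)) := by
  have hhalf : Tendsto (fun y : ℝ => y / 2) (nhdsWithin 0 (Set.Ioi 0)) (nhds 0) := by
    have : Tendsto (fun y : ℝ => y / 2) (nhds 0) (nhds 0) := by
      have := (continuous_id.div_const 2).tendsto (0 : ℝ)
      simpa using this
    exact this.mono_left nhdsWithin_le_nhds
  have hcongr : ∀ᶠ y in nhdsWithin (0:ℝ) (Set.Ioi 0),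
      Phi (-k / y + y / 2) - Real.exp k * Phi (-k / y - y / 2) = CBS k y := by
    filter_upwards [self_mem_nhdsWithin] with y hy
    rw [CBS, if_pos (Set.mem_Ioi.1 hy)]
  rcases lt_trichotomy k 0 with hk | rfl | hk
  · have hinv : Tendsto (fun y : ℝ => -k / y) (nhdsWithin 0 (Set.Ioi 0)) atTop := by
      have h1 : Tendsto (fun y : ℝ => y⁻¹) (nhdsWithin 0 (Set.Ioi 0)) atTop :=
        tendsto_inv_nhdsGT_zero
      have := Tendsto.const_mul_atTop (neg_pos.2 hk) h1
      exact this.congr fun y => (div_eq_mul_inv _ _).symm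
    have hd1 : Tendsto (fun y : ℝ => -k / y + y / 2) (nhdsWithin 0 (Set.Ioi 0)) atTop :=
      hinv.atTop_add hhalf
    have hd2 : Tendsto (fun y : ℝ => -k / y - y / 2) (nhdsWithin 0 (Set.Ioi 0)) atTop := by
      have := hinv.atTop_add (hhalf.neg)
      exact (this.congr fun y => by ring)
    have h := (tendsto_Phi_atTop.comp hd1).sub ((tendsto_Phi_atTop.comp hd2).const_mul
      (Real.exp k))
    rw [mul_one] at h
    have hmax : max (1 - Real.exp k) 0 = 1 - Real.exp k := by
      apply max_eq_left
      have : Real.exp k < 1 := by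
        rw [← Real.exp_zero]
        exact Real.exp_lt_exp.2 hk
      linarith
    rw [hmax]
    exact h.congr' hcongr
  · have hcc : Continuous (fun y : ℝ => Phi (y / 2) - Real.exp 0 * Phi (-(y / 2))) :=
      (continuous_Phi.comp (continuous_id.div_const 2)).sub
        (continuous_const.mul (continuous_Phi.comp ((continuous_id.div_const 2).neg)))
    have ht := (hcc.tendsto 0).mono_left (nhdsWithin_le_nhds (s := Set.Ioi (0:ℝ)))
    have hval : Phi ((0:ℝ) / 2) - Real.exp 0 * Phi (-((0:ℝ) / 2)) = max (1 - Real.exp 0) 0 := by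
      norm_num [Real.exp_zero]
    rw [hval] at ht
    refine ht.congr' ?_
    filter_upwards [self_mem_nhdsWithin] with y hy
    rw [CBS, if_pos (Set.mem_Ioi.1 hy),
      show -(0:ℝ) / y + y / 2 = y / 2 by ring, show -(0:ℝ) / y - y / 2 = -(y / 2) by ring]
  · have hinv : Tendsto (fun y : ℝ => -k / y) (nhdsWithin 0 (Set.Ioi 0)) atBot := by
      have h1 : Tendsto (fun y : ℝ => y⁻¹) (nhdsWithin 0 (Set.Ioi 0)) atTop :=
        tendsto_inv_nhdsGT_zero
      have h2 := Tendsto.const_mul_atTop hk h1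
      have := tendsto_neg_atBot_iff.2 h2
      exact this.congr fun y => by rw [← neg_mul, ← div_eq_mul_inv]
    have hd1 : Tendsto (fun y : ℝ => -k / y + y / 2) (nhdsWithin 0 (Set.Ioi 0)) atBot :=
      hinv.atBot_add hhalf
    have hd2 : Tendsto (fun y : ℝ => -k / y - y / 2) (nhdsWithin 0 (Set.Ioi 0)) atBot := by
      have := hinv.atBot_add (hhalf.neg)
      exact (this.congr fun y => by ring)
    have h := (tendsto_Phi_atBot.comp hd1).sub ((tendsto_Phi_atBot.comp hd2).const_mul
      (Real.exp k))
    rw [mul_zero, sub_zero] at h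
    have hmax : max (1 - Real.exp k) 0 = 0 := by
      apply max_eq_right
      have : 1 < Real.exp k := by
        rw [← Real.exp_zero]
        exact Real.exp_lt_exp.2 hk
      linarith
    rw [hmax]
    exact h.congr' hcongr
lemma YBS_spec {k c : ℝ} (hc : max (1 - Real.exp k) 0 ≤ c) (hc1 : c < 1) :
    0 ≤ YBS k c ∧ CBS k (YBS k c) = c := by
  obtain ⟨y, hy0, hyc⟩ : ∃ y, 0 ≤ y ∧ CBS k y = c := by
    rcases eq_or_lt_of_le hc with heq | hlt
    · exact ⟨0, le_rfl, by rw [CBS_zero]; exact heq⟩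
    · obtain ⟨T, hTc, hT0⟩ :=
        (((tendsto_CBS_atTop k).eventually_const_lt hc1).and (eventually_gt_atTop 0)).exists
      obtain ⟨t, htc, ht0⟩ :=
        (((tendsto_CBS_zero k).eventually_lt_const hlt).and self_mem_nhdsWithin).exists
      have htT : t ≤ T := by
        by_contra hTt
        push_neg at hTt
        have := (CBS_strictMonoOn k) (Set.mem_Ici.2 hT0.le) (Set.mem_Ici.2 ht0.le) hTt
        linarith
      obtain ⟨y, hy, hcy⟩ := intermediate_value_Icc htT
        ((continuousOn_CBS k).mono fun z hz => Set.mem_Ioi.2 (lt_of_lt_of_le ht0 hz.1))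
        ⟨htc.le, hTc.le⟩
      exact ⟨y, le_trans ht0.le hy.1, hcy⟩
  have hset : {z : ℝ | 0 ≤ z ∧ CBS k z = c} = {y} := by
    ext z
    constructor
    · rintro ⟨hz0, hzc⟩
      exact (CBS_strictMonoOn k).injOn (Set.mem_Ici.2 hz0) (Set.mem_Ici.2 hy0)
        (hzc.trans hyc.symm)
    · rintro rfl
      exact ⟨hy0, hyc⟩
  rw [YBS, hset, csInf_singleton]
  exact ⟨hy0, hyc⟩

lemma YBS_pos {k c : ℝ} (hc : max (1 - Real.exp k) 0 ≤ c) (hc1 : c < 1)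
    (hlt : max (1 - Real.exp k) 0 < c) : 0 < YBS k c := by
  obtain ⟨h0, hcbs⟩ := YBS_spec hc hc1
  rcases eq_or_lt_of_le h0 with heq | h
  · exfalso
    rw [← heq, CBS_zero] at hcbs
    linarith
  · exact h
lemma claim_lb {k c : ℝ} (hc : max (1 - Real.exp k) 0 ≤ c) (hc1 : c < 1) (d : ℝ) :
    ((YBS k c : ℝ) : EReal) ≤ PhiInvE (c + Real.exp k * Phi d) - (d : EReal) := by
  obtain ⟨hy0, hycbs⟩ := YBS_spec hc hc1
  have hc0 : 0 ≤ c := le_trans (le_max_right _ _) hc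
  have hu0 : 0 < c + Real.exp k * Phi d := by
    have := mul_pos (Real.exp_pos k) (Phi_pos d)
    linarith
  by_cases hu1 : 1 ≤ c + Real.exp k * Phi d
  · rw [PhiInvE, if_pos hu1, EReal.top_sub_coe]
    exact le_top
  · push_neg at hu1
    rw [PhiInvE, if_neg (not_le.2 hu1), if_neg (not_le.2 hu0)]
    have hkey : Phi (d + YBS k c) ≤ c + Real.exp k * Phi d := by
      rcases eq_or_lt_of_le hy0 with h0 | hpos
      · rw [← h0, add_zero]
        have hΦ := Phi_pos d
        have hΦ1 := Phi_lt_one d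
        rcases le_total (Real.exp k) 1 with hek | hek
        · have h2 : 1 - Real.exp k ≤ c := le_trans (le_max_left _ _) hc
          nlinarith
        · nlinarith
      · have := key_le (k := k) hpos d
        rw [hycbs] at this
        linarith
    have hle : d + YBS k c ≤ PhiInv (c + Real.exp k * Phi d) := by
      have h2 : Phi (d + YBS k c) ≤ Phi (PhiInv (c + Real.exp k * Phi d)) := by
        rw [Phi_PhiInv hu0 hu1]
        exact hkey
      exact strictMono_Phi.le_iff_le.1 h2
    rw [← EReal.coe_sub]
    exact EReal.coe_le_coe_iff.2 (by linarith)

lemma claim_attain {k c : ℝ} (hc : max (1 - Real.exp k) 0 ≤ c) (hc1 : c < 1)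
    (hpos : 0 < YBS k c) :
    PhiInvE (c + Real.exp k * Phi (-k / YBS k c - YBS k c / 2)) -
      ((-k / YBS k c - YBS k c / 2 : ℝ) : EReal) = ((YBS k c : ℝ) : EReal) := by
  obtain ⟨hy0, hycbs⟩ := YBS_spec hc hc1
  have he : c + Real.exp k * Phi (-k / YBS k c - YBS k c / 2) =
      Phi ((-k / YBS k c - YBS k c / 2) + YBS k c) := by
    rw [CBS_of_pos hpos] at hycbs
    linarith
  rw [he, PhiInvE, if_neg (not_le.2 (Phi_lt_one _)), if_neg (not_le.2 (Phi_pos _)),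
    PhiInv_eq (rfl : Phi ((-k / YBS k c - YBS k c / 2) + YBS k c) = _), ← EReal.coe_sub]
  norm_cast
  ring

lemma eps_bound {k c ε : ℝ} (hceq : c = max (1 - Real.exp k) 0) (hε : 0 < ε) :
    ∃ d : ℝ, PhiInvE (c + Real.exp k * Phi d) - (d : EReal) ≤ ((ε : ℝ) : EReal) := by
  rcases le_total k 0 with hk | hk
  · -- c = 1 - exp k
    have hek1 : Real.exp k ≤ 1 := by
      rw [← Real.exp_zero]
      exact Real.exp_le_exp.2 hk
    have hcval : c = 1 - Real.exp k := by
      rw [hceq, max_eq_left (by linarith)]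
    obtain ⟨x, hx⟩ := (tail_ratio hε (Real.exp_pos k)).exists
    refine ⟨x, ?_⟩
    have hΦx := Phi_pos (-x)
    have hu : c + Real.exp k * Phi x = 1 - Real.exp k * Phi (-x) := by
      rw [hcval, Phi_neg]
      ring
    have hu1 : c + Real.exp k * Phi x < 1 := by
      rw [hu]
      have := mul_pos (Real.exp_pos k) hΦx
      linarith
    have hu0 : 0 < c + Real.exp k * Phi x := by
      have := mul_pos (Real.exp_pos k) (Phi_pos x)
      have : (0:ℝ) ≤ c := by rw [hceq]; exact le_max_right _ _
      have := mul_pos (Real.exp_pos k) (Phi_pos x)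
      linarith
    have hb : c + Real.exp k * Phi x ≤ Phi (x + ε) := by
      have h1 : Phi (-(x + ε)) = 1 - Phi (x + ε) := Phi_neg (x + ε)
      rw [hu]
      linarith
    have hle : PhiInv (c + Real.exp k * Phi x) ≤ x + ε := by
      have h2 : Phi (PhiInv (c + Real.exp k * Phi x)) ≤ Phi (x + ε) := by
        rw [Phi_PhiInv hu0 hu1]
        exact hb
      exact strictMono_Phi.le_iff_le.1 h2
    rw [PhiInvE, if_neg (not_le.2 hu1), if_neg (not_le.2 hu0), ← EReal.coe_sub]
    exact EReal.coe_le_coe_iff.2 (by linarith)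
  · -- c = 0
    have hcval : c = 0 := by
      rw [hceq, max_eq_right]
      have : (1:ℝ) ≤ Real.exp k := by
        rw [← Real.exp_zero]
        exact Real.exp_le_exp.2 hk
      linarith
    have hsmall : Tendsto (fun x : ℝ => Phi (-(x + ε))) atTop (nhds 0) := by
      apply tendsto_Phi_atBot.comp
      have h := tendsto_neg_atBot_iff.2 (tendsto_atTop_add_const_right atTop ε tendsto_id)
      exact h
    obtain ⟨x, hx, hxs⟩ :=
      ((tail_ratio hε (Real.exp_pos (-k))).and
        (hsmall.eventually_lt_const (Real.exp_pos (-k)))).exists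
    refine ⟨-(x + ε), ?_⟩
    have hu0 : 0 < c + Real.exp k * Phi (-(x + ε)) := by
      have := mul_pos (Real.exp_pos k) (Phi_pos (-(x + ε)))
      rw [hcval]
      linarith
    have hu1 : c + Real.exp k * Phi (-(x + ε)) < 1 := by
      rw [hcval, zero_add]
      have h1 : Real.exp k * Phi (-(x + ε)) < Real.exp k * Real.exp (-k) :=
        mul_lt_mul_of_pos_left hxs (Real.exp_pos k)
      rw [← Real.exp_add, add_neg_cancel, Real.exp_zero] at h1
      exact h1
    have hb : c + Real.exp k * Phi (-(x + ε)) ≤ Phi (-x) := by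
      rw [hcval, zero_add]
      have h1 : Real.exp k * Phi (-(x + ε)) ≤ Real.exp k * (Real.exp (-k) * Phi (-x)) :=
        mul_le_mul_of_nonneg_left hx (Real.exp_pos k).le
      rw [← mul_assoc, ← Real.exp_add, add_neg_cancel, Real.exp_zero, one_mul] at h1
      exact h1
    have hle : PhiInv (c + Real.exp k * Phi (-(x + ε))) ≤ -x := by
      have h2 : Phi (PhiInv (c + Real.exp k * Phi (-(x + ε)))) ≤ Phi (-x) := by
        rw [Phi_PhiInv hu0 hu1]
        exact hb
      exact strictMono_Phi.le_iff_le.1 h2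
    rw [PhiInvE, if_neg (not_le.2 hu1), if_neg (not_le.2 hu0), ← EReal.coe_sub]
    exact EReal.coe_le_coe_iff.2 (by linarith)
theorem stmt_9 (k c : ℝ) (hc : max (1 - Real.exp k) 0 ≤ c) (hc1 : c < 1) :
    ((YBS k c : ℝ) : EReal) =
      ⨅ d : ℝ, (PhiInvE (c + Real.exp k * Phi d) - (d : EReal)) ∧
    (max (1 - Real.exp k) 0 < c →
      ((YBS k c : ℝ) : EReal) =
        PhiInvE (c + Real.exp k * Phi (-k / YBS k c - YBS k c / 2)) -
          ((-k / YBS k c - YBS k c / 2 : ℝ) : EReal)) := by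
  obtain ⟨hy0, hycbs⟩ := YBS_spec hc hc1
  constructor
  · apply le_antisymm
    · exact le_iInf (claim_lb hc hc1)
    · rcases eq_or_lt_of_le hy0 with h0 | hpos
      · have hceq : c = max (1 - Real.exp k) 0 := by
          rw [← hycbs, ← h0, CBS_zero]
        rw [← h0]
        by_contra hcon
        push_neg at hcon
        obtain ⟨r, hr1, hr2⟩ := EReal.lt_iff_exists_real_btwn.1 hcon
        have hr0 : (0:ℝ) < r := by exact_mod_cast hr1
        obtain ⟨d, hd⟩ := eps_bound hceq hr0
        have hle := iInf_le (fun d : ℝ => PhiInvE (c + Real.exp k * Phi d) - (d : EReal)) d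
        exact absurd (lt_of_le_of_lt (hle.trans hd) hr2) (lt_irrefl _)
      · calc (⨅ d : ℝ, PhiInvE (c + Real.exp k * Phi d) - (d : EReal))
            ≤ PhiInvE (c + Real.exp k * Phi (-k / YBS k c - YBS k c / 2)) -
              ((-k / YBS k c - YBS k c / 2 : ℝ) : EReal) :=
            iInf_le (fun d : ℝ => PhiInvE (c + Real.exp k * Phi d) - (d : EReal))
              (-k / YBS k c - YBS k c / 2)
          _ = ((YBS k c : ℝ) : EReal) := claim_attain hc hc1 hpos
  · intro hlt
    exact (claim_attain hc hc1 (YBS_pos hc hc1 hlt)).symm
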